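/- For every ν ∈ (-1,1) and all complex numbers η₊, η₋, the p-wave potential energy density e_pot(η) = (1/2)(|η₊|²−1)² + (1/2)(|η₋|²−1)² + 2|η₊|²|η₋|² + ν·(η₊²)·(η₋²) satisfies e_pot(η) ≥ 1/2, with equality if and only if (|η₋|, |η₊|) = (1,0) or (|η₋|, |η₊|) = (0,1). -/

import Mathlib

set_option maxHeartbeats 1000000


/-- Real dot product of complex numbers viewed as vectors in ℝ². -/
noncomputable def cdot (a b : ℂ) : ℝ := a.re * b.re + a.im * b.im

/-- The p-wave potential energy density. -/
noncomputable def epot (ν : ℝ) (ηm ηp : ℂ) : ℝ :=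
  (1 / 2) * (‖ηp‖ ^ 2 - 1) ^ 2 + (1 / 2) * (‖ηm‖ ^ 2 - 1) ^ 2
    + 2 * ‖ηp‖ ^ 2 * ‖ηm‖ ^ 2 + ν * cdot (ηp ^ 2) (ηm ^ 2)

theorem stmt2 (ν : ℝ) (hν : ν ∈ Set.Ioo (-1 : ℝ) 1) (ηm ηp : ℂ) :
    epot ν ηm ηp ≥ 1 / 2
    ∧ (epot ν ηm ηp = 1 / 2 ↔
        (‖ηm‖ = 1 ∧ ‖ηp‖ = 0) ∨
        (‖ηm‖ = 0 ∧ ‖ηp‖ = 1)) := by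
  obtain ⟨hν1, hν2⟩ := hν
  set x := ‖ηp‖ ^ 2 with hxdef
  set y := ‖ηm‖ ^ 2 with hydef
  set c := cdot (ηp ^ 2) (ηm ^ 2) with hcdef
  have hx0 : 0 ≤ x := by positivity
  have hy0 : 0 ≤ y := by positivity
  have hcre : c = (ηp ^ 2 * (starRingEnd ℂ) (ηm ^ 2)).re := by
    rw [hcdef]
    simp only [cdot, Complex.mul_re, Complex.conj_re, Complex.conj_im]
    ring
  have hcabs : |c| ≤ x * y := by
    rw [hcre]
    calc |(ηp ^ 2 * (starRingEnd ℂ) (ηm ^ 2)).re|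
        ≤ ‖ηp ^ 2 * (starRingEnd ℂ) (ηm ^ 2)‖ := Complex.abs_re_le_norm _
      _ = x * y := by
          rw [norm_mul, Complex.norm_conj, norm_pow, norm_pow]
  obtain ⟨hcl, hcu⟩ := abs_le.mp hcabs
  have h1 : 0 ≤ (1 + ν) * (x * y + c) := mul_nonneg (by linarith) (by linarith)
  have h2 : 0 ≤ (1 - ν) * (x * y - c) := mul_nonneg (by linarith) (by linarith)
  have hnn : 0 ≤ x * y + ν * c := by nlinarith
  have key : epot ν ηm ηp = (x + y - 1) ^ 2 / 2 + 1 / 2 + (x * y + ν * c) := by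
    simp only [epot, ← hxdef, ← hydef, ← hcdef]
    ring
  have hsq : 0 ≤ (x + y - 1) ^ 2 / 2 := by positivity
  clear_value x y c
  constructor
  · rw [key]; linarith
  constructor
  · intro heq
    rw [key] at heq
    have hA : (x + y - 1) ^ 2 / 2 = 0 := by linarith
    have hB : x * y + ν * c = 0 := by linarith
    have hsum : (1 + ν) * (x * y + c) + (1 - ν) * (x * y - c) = 0 := by
      linear_combination 2 * hB
    have he1 : (1 + ν) * (x * y + c) = 0 := by linarith
    have he2 : (1 - ν) * (x * y - c) = 0 := by linarith
    have hc1 : x * y + c = 0 := (mul_eq_zero.mp he1).resolve_left (by linarith)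
    have hc2 : x * y - c = 0 := (mul_eq_zero.mp he2).resolve_left (by linarith)
    have hxy : x * y = 0 := by linarith
    have hs : x + y = 1 := by nlinarith [sq_nonneg (x + y - 1)]
    rw [hxdef, hydef] at hxy hs
    rcases mul_eq_zero.mp hxy with hx | hy
    · left
      have hpz : ‖ηp‖ = 0 := pow_eq_zero_iff (n := 2) (by norm_num) |>.mp hx
      have hm1 : ‖ηm‖ ^ 2 = 1 := by rw [hx] at hs; linarith
      refine ⟨?_, hpz⟩
      nlinarith [norm_nonneg ηm, sq_nonneg (‖ηm‖ - 1),
        sq_nonneg (‖ηm‖ + 1)]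
    · right
      have hmz : ‖ηm‖ = 0 := pow_eq_zero_iff (n := 2) (by norm_num) |>.mp hy
      have hp1 : ‖ηp‖ ^ 2 = 1 := by rw [hy] at hs; linarith
      refine ⟨hmz, ?_⟩
      nlinarith [norm_nonneg ηp, sq_nonneg (‖ηp‖ - 1),
        sq_nonneg (‖ηp‖ + 1)]
  · rintro (⟨hm, hp⟩ | ⟨hm, hp⟩)
    · have hp0 : ηp = 0 := by simpa using hp
      have hx' : x = 0 := by rw [hxdef, hp]; ring
      have hy' : y = 1 := by rw [hydef, hm]; ring
      have hc0 : c = 0 := by rw [hcdef, hp0]; simp [cdot]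
      rw [key, hx', hy', hc0]; ring
    · have hm0 : ηm = 0 := by simpa using hm
      have hx' : x = 1 := by rw [hxdef, hp]; ring
      have hy' : y = 0 := by rw [hydef, hm]; ring
      have hc0 : c = 0 := by rw [hcdef, hm0]; simp [cdot]
      rw [key, hx', hy', hc0]; ring
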